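/- Let X be a discrete real random variable with CDF F_X and probability mass function P_X, and let θ be uniformly distributed on [0,1] independent of X. Then F_X(X) − θ·P_X(X) is uniformly distributed on [0,1], and consequently Φ⁻¹(F_X(X) − θ·P_X(X)) has the standard normal distribution. -/

import Mathlib

open MeasureTheory ProbabilityTheory

lemma aux_measurable_of_ne_zero_countable {f : ℝ → ℝ} (h : {x | f x ≠ 0}.Countable) :
    Measurable f := by
  intro t ht
  by_cases h0 : (0:ℝ) ∈ t
  · have he : f ⁻¹' t = ({x | f x ≠ 0} ∩ f ⁻¹' t) ∪ {x | f x ≠ 0}ᶜ := by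
      ext x
      by_cases hx : f x = 0 <;> simp [Set.mem_preimage, hx, h0]
    rw [he]
    exact ((h.mono Set.inter_subset_left).measurableSet).union h.measurableSet.compl
  · have he : f ⁻¹' t = {x | f x ≠ 0} ∩ f ⁻¹' t := by
      ext x
      by_cases hx : f x = 0 <;> simp [Set.mem_preimage, hx, h0]
    rw [he]
    exact (h.mono Set.inter_subset_left).measurableSet

theorem randomized_gaussianization_discrete
    {Ω : Type*} [MeasureSpace Ω] [IsProbabilityMeasure (ℙ : Measure Ω)]
    (X : Ω → ℝ) (hX : Measurable X) (hdiscrete : (Set.range X).Countable)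
    (θ : Ω → ℝ) (hθ : Measurable θ)
    (hθunif : Measure.map θ ℙ = (volume : Measure ℝ).restrict (Set.Icc 0 1))
    (hindep : IndepFun X θ ℙ)
    (F : ℝ → ℝ) (hF : ∀ x, F x = cdf (Measure.map X ℙ) x)
    (P : ℝ → ℝ) (hP : ∀ x, P x = (Measure.map X ℙ {x}).toReal)
    (Φinv : ℝ → ℝ) (hΦinvMeas : Measurable Φinv)
    (hΦinv : ∀ p ∈ Set.Ioo (0:ℝ) 1, cdf (gaussianReal 0 1) (Φinv p) = p)
    (hΦinvMono : StrictMonoOn Φinv (Set.Ioo (0:ℝ) 1)) :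
    Measure.map (fun ω => F (X ω) - θ ω * P (X ω)) ℙ
        = (volume : Measure ℝ).restrict (Set.Icc 0 1)
      ∧ Measure.map (fun ω => Φinv (F (X ω) - θ ω * P (X ω))) ℙ = gaussianReal 0 1 := by
  classical
  set μ : Measure ℝ := Measure.map X ℙ with hμdef
  haveI hμprob : IsProbabilityMeasure μ := Measure.isProbabilityMeasure_map hX.aemeasurable
  set S : Set ℝ := Set.range X with hSdef
  have hSm : MeasurableSet S := hdiscrete.measurableSet
  haveI : Countable S := hdiscrete.to_subtype
  have hμSc : μ Sᶜ = 0 := by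
    rw [hμdef, Measure.map_apply hX hSm.compl]
    have he : X ⁻¹' Sᶜ = ∅ := by
      ext ω; simp [hSdef]
    simp [he]
  -- basic facts about F and P
  have hFtoReal : ∀ x, F x = (μ (Set.Iic x)).toReal := fun x => by
    rw [hF]; exact cdf_eq_real μ x
  have hFB : ∀ x, ENNReal.ofReal (F x) = μ (Set.Iic x) := fun x => by
    rw [hF]; exact ofReal_cdf μ x
  have hPofReal : ∀ x, ENNReal.ofReal (P x) = μ {x} := fun x => by
    rw [hP]; exact ENNReal.ofReal_toReal (measure_ne_top μ _)
  have hP0 : ∀ x, 0 ≤ P x := fun x => by rw [hP]; exact ENNReal.toReal_nonneg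
  have hF1 : ∀ x, F x ≤ 1 := fun x => by rw [hF]; exact cdf_le_one μ x
  have hIicsplit : ∀ x : ℝ, μ (Set.Iic x) = μ (Set.Iio x) + μ {x} := by
    intro x
    rw [← Set.Iio_union_right, measure_union (by simp) (measurableSet_singleton x)]
  have hAtoReal : ∀ x, F x - P x = (μ (Set.Iio x)).toReal := by
    intro x
    have h2 : (μ (Set.Iic x)).toReal = (μ (Set.Iio x)).toReal + (μ {x}).toReal := by
      rw [hIicsplit x, ENNReal.toReal_add (measure_ne_top _ _) (measure_ne_top _ _)]
    rw [hFtoReal, h2, hP]; ring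
  have hA : ∀ x, ENNReal.ofReal (F x - P x) = μ (Set.Iio x) := fun x => by
    rw [hAtoReal]; exact ENNReal.ofReal_toReal (measure_ne_top μ _)
  have hA0 : ∀ x, 0 ≤ F x - P x := fun x => by rw [hAtoReal]; exact ENNReal.toReal_nonneg
  -- measurability
  have hFmeas : Measurable F := by
    have he : F = fun x => cdf μ x := funext hF
    rw [he]; exact (monotone_cdf μ).measurable
  have hPmeas : Measurable P := by
    apply aux_measurable_of_ne_zero_countable
    apply hdiscrete.mono
    intro x hx
    by_contra hxS
    apply hx
    have hz : μ {x} = 0 := by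
      apply measure_mono_null _ hμSc
      intro z hz
      simp only [Set.mem_singleton_iff] at hz
      simpa [hz] using hxS
    rw [hP, hz]; simp
  set U : Ω → ℝ := fun ω => F (X ω) - θ ω * P (X ω) with hUdef
  have hUmeas : Measurable U := (hFmeas.comp hX).sub (hθ.mul (hPmeas.comp hX))
  set ν : Measure ℝ := volume.restrict (Set.Icc 0 1) with hνdef
  haveI hνprob : IsProbabilityMeasure ν := ⟨by
    rw [hνdef, Measure.restrict_apply_univ, Real.volume_Icc]; simp⟩
  -- disjointness of the intervals
  have hdisj : ∀ x y : ℝ, x < y → F x ≤ F y - P y := by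
    intro x y hxy
    have h1 : μ (Set.Iic x) ≤ μ (Set.Iio y) :=
      measure_mono (fun z hz => lt_of_le_of_lt hz hxy)
    rw [hFtoReal, hAtoReal]
    exact ENNReal.toReal_mono (measure_ne_top μ _) h1
  have hpd' : Pairwise (Function.onFun Disjoint
      fun x : S => Set.Ioc (F (x:ℝ) - P (x:ℝ)) (F (x:ℝ))) := by
    intro x y hxy
    have hne : (x:ℝ) ≠ (y:ℝ) := fun h => hxy (Subtype.coe_injective h)
    rw [Function.onFun, Set.Ioc_disjoint_Ioc]
    rcases hne.lt_or_gt with h | h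
    · calc min (F (x:ℝ)) (F (y:ℝ)) ≤ F (x:ℝ) := min_le_left _ _
        _ ≤ F (y:ℝ) - P (y:ℝ) := hdisj _ _ h
        _ ≤ max (F (x:ℝ) - P (x:ℝ)) (F (y:ℝ) - P (y:ℝ)) := le_max_right _ _
    · calc min (F (x:ℝ)) (F (y:ℝ)) ≤ F (y:ℝ) := min_le_right _ _
        _ ≤ F (x:ℝ) - P (x:ℝ) := hdisj _ _ h
        _ ≤ max (F (x:ℝ) - P (x:ℝ)) (F (y:ℝ) - P (y:ℝ)) := le_max_left _ _
  set T : Set ℝ := ⋃ x : S, Set.Ioc (F (x:ℝ) - P (x:ℝ)) (F (x:ℝ)) with hTdef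
  have hTmeas : MeasurableSet T := MeasurableSet.iUnion fun x => measurableSet_Ioc
  have hTsub : T ⊆ Set.Icc 0 1 := by
    intro z hz
    rw [hTdef, Set.mem_iUnion] at hz
    obtain ⟨x, hx1, hx2⟩ := hz
    exact ⟨le_of_lt (lt_of_le_of_lt (hA0 _) hx1), le_trans hx2 (hF1 _)⟩
  have hμS1 : μ S = 1 := by
    have h2 := measure_add_measure_compl (μ := μ) hSm
    rw [hμSc, add_zero, measure_univ] at h2
    exact h2
  have hTvol : volume T = 1 := by
    rw [hTdef, measure_iUnion hpd' (fun x => measurableSet_Ioc)]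
    have he : ∀ x : S, volume (Set.Ioc (F (x:ℝ) - P (x:ℝ)) (F (x:ℝ))) = μ {(x:ℝ)} := by
      intro x
      rw [Real.volume_Ioc, ← hPofReal]
      congr 1; ring
    rw [tsum_congr he,
      ← measure_iUnion (fun x y hxy => by
          simpa [Function.onFun, Set.disjoint_singleton] using
            (fun h => hxy (Subtype.coe_injective h) : (x:ℝ) ≠ (y:ℝ)))
        (fun x : S => measurableSet_singleton ((x:ℝ))),
      Set.iUnion_of_singleton_coe, hμS1]
  have hTae : T =ᵐ[volume] Set.Icc (0:ℝ) 1 := by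
    apply ae_eq_of_subset_of_measure_ge hTsub _ hTmeas.nullMeasurableSet
    · rw [Real.volume_Icc]; simp
    · rw [Real.volume_Icc, hTvol]; simp
  -- the key CDF computation
  have key : ∀ t : ℝ, Measure.map U ℙ (Set.Iic t) = ν (Set.Iic t) := by
    intro t
    have hpair : Measure.map (fun ω => (X ω, θ ω)) ℙ = μ.prod ν := by
      rw [← hθunif]
      exact (indepFun_iff_map_prod_eq_prod_map_map hX.aemeasurable hθ.aemeasurable).mp hindep
    have hfmeas : Measurable (fun p : ℝ × ℝ => F p.1 - p.2 * P p.1) :=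
      (hFmeas.comp measurable_fst).sub (measurable_snd.mul (hPmeas.comp measurable_fst))
    have step1 : Measure.map U ℙ (Set.Iic t)
        = (μ.prod ν) ((fun p : ℝ × ℝ => F p.1 - p.2 * P p.1) ⁻¹' Set.Iic t) := by
      rw [Measure.map_apply hUmeas measurableSet_Iic, ← hpair,
        Measure.map_apply (hX.prodMk hθ) (hfmeas measurableSet_Iic)]
      rfl
    have step2 : (μ.prod ν) ((fun p : ℝ × ℝ => F p.1 - p.2 * P p.1) ⁻¹' Set.Iic t)
        = ∫⁻ x, ν {u | F x - u * P x ≤ t} ∂μ := by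
      rw [Measure.prod_apply (hfmeas measurableSet_Iic)]
      rfl
    have hae : ∀ᵐ x ∂μ, x ∈ S := by
      rw [ae_iff]
      simpa [Set.compl_def] using hμSc
    have step3 : ∫⁻ x, ν {u | F x - u * P x ≤ t} ∂μ
        = ∑' x : S, ν {u | F (x:ℝ) - u * P (x:ℝ) ≤ t} * μ {(x:ℝ)} := by
      conv_lhs => rw [← Measure.restrict_eq_self_of_ae_mem hae]
      exact lintegral_countable _ hdiscrete
    have hterm : ∀ x : ℝ, ν {u | F x - u * P x ≤ t} * μ {x}
        = volume (Set.Ioc (F x - P x) (F x) ∩ Set.Iic t) := by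
      intro x
      rw [Set.Ioc_inter_Iic, show F x ⊓ t = min (F x) t from rfl]
      rcases eq_or_lt_of_le (hP0 x) with hp | hp
      · have hμx : μ {x} = 0 := by rw [← hPofReal x, ← hp]; simp
        rw [hμx, mul_zero, Real.volume_Ioc, eq_comm, ENNReal.ofReal_eq_zero]
        have h1 := min_le_left (F x) t
        rw [← hp]
        linarith
      · have hset : {u : ℝ | F x - u * P x ≤ t} = Set.Ici ((F x - t) / P x) := by
          ext u
          simp only [Set.mem_setOf_eq, Set.mem_Ici, div_le_iff₀ hp]
          constructor <;> intro h <;> linarith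
        rw [hset, hνdef, Measure.restrict_apply measurableSet_Ici]
        have hinter : Set.Ici ((F x - t)/P x) ∩ Set.Icc (0:ℝ) 1
            = Set.Icc (max ((F x - t)/P x) 0) 1 := by
          ext u
          simp only [Set.mem_inter_iff, Set.mem_Ici, Set.mem_Icc, max_le_iff]
          tauto
        rw [hinter, Real.volume_Icc, ← hPofReal x, ← ENNReal.ofReal_mul' (hP0 x),
          Real.volume_Ioc]
        congr 1
        have hc : ((F x - t)/P x) * P x = F x - t := div_mul_cancel₀ _ (ne_of_gt hp)
        have hmax : max ((F x - t)/P x) 0 * P x = max (F x - t) 0 := by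
          rw [max_mul_of_nonneg _ _ (hP0 x), hc, zero_mul]
        rw [sub_mul, one_mul, hmax]
        rcases le_total (F x) t with h | h
        · rw [min_eq_left h, max_eq_right (by linarith)]; ring
        · rw [min_eq_right h, max_eq_left (by linarith)]; ring
    have hpd : Pairwise (Function.onFun Disjoint
        fun x : S => Set.Ioc (F (x:ℝ) - P (x:ℝ)) (F (x:ℝ)) ∩ Set.Iic t) :=
      fun x y hxy => ((hpd' hxy).mono Set.inter_subset_left Set.inter_subset_left)
    calc Measure.map U ℙ (Set.Iic t)
        = ∑' x : S, ν {u | F (x:ℝ) - u * P (x:ℝ) ≤ t} * μ {(x:ℝ)} := by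
          rw [step1, step2, step3]
      _ = ∑' x : S, volume (Set.Ioc (F (x:ℝ) - P (x:ℝ)) (F (x:ℝ)) ∩ Set.Iic t) :=
          tsum_congr fun x => hterm (x:ℝ)
      _ = volume (⋃ x : S, Set.Ioc (F (x:ℝ) - P (x:ℝ)) (F (x:ℝ)) ∩ Set.Iic t) :=
          (measure_iUnion hpd (fun x => measurableSet_Ioc.inter measurableSet_Iic)).symm
      _ = volume (T ∩ Set.Iic t) := by rw [hTdef, ← Set.iUnion_inter]
      _ = volume (Set.Icc (0:ℝ) 1 ∩ Set.Iic t) :=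
          measure_congr (ae_eq_set_inter hTae (ae_eq_refl _))
      _ = ν (Set.Iic t) := by
          rw [hνdef, Measure.restrict_apply measurableSet_Iic, Set.inter_comm]
  haveI : IsProbabilityMeasure (Measure.map U ℙ) := Measure.isProbabilityMeasure_map hUmeas.aemeasurable
  have h1 : Measure.map U ℙ = ν := Measure.ext_of_Iic _ _ key
  refine ⟨h1, ?_⟩
  have hcomp : Measure.map (fun ω => Φinv (U ω)) ℙ = Measure.map Φinv ν := by
    rw [← h1, Measure.map_map hΦinvMeas hUmeas]
    rfl
  rw [show (fun ω => Φinv (F (X ω) - θ ω * P (X ω))) = fun ω => Φinv (U ω) from rfl, hcomp]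
  haveI : IsProbabilityMeasure (Measure.map Φinv ν) :=
    Measure.isProbabilityMeasure_map hΦinvMeas.aemeasurable
  refine Measure.ext_of_Iic _ _ (fun y => ?_)
  set G : Measure ℝ := gaussianReal 0 1 with hGdef
  set c : ℝ := cdf G y with hcdef
  have hc0 : (0:ℝ) ≤ c := cdf_nonneg _ _
  have hc1 : c ≤ 1 := cdf_le_one _ _
  have hGy : G (Set.Iic y) = ENNReal.ofReal c := (ofReal_cdf G y).symm
  rw [Measure.map_apply hΦinvMeas measurableSet_Iic, hνdef,
    Measure.restrict_apply (hΦinvMeas measurableSet_Iic), hGy]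
  apply le_antisymm
  · have hsub : Φinv ⁻¹' Set.Iic y ∩ Set.Icc 0 1 ⊆ Set.Icc 0 c ∪ {1} := by
      rintro p ⟨hpy, hp0, hp1⟩
      rcases eq_or_lt_of_le hp1 with h1 | h1
      · right; simp [h1]
      rcases eq_or_lt_of_le hp0 with h0 | h0
      · left; exact ⟨hp0, by rw [← h0]; exact hc0⟩
      · left
        refine ⟨hp0, ?_⟩
        calc p = cdf G (Φinv p) := (hΦinv p ⟨h0, h1⟩).symm
          _ ≤ c := monotone_cdf G hpy
    calc volume (Φinv ⁻¹' Set.Iic y ∩ Set.Icc 0 1)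
        ≤ volume (Set.Icc 0 c ∪ {1}) := measure_mono hsub
      _ ≤ volume (Set.Icc (0:ℝ) c) + volume {(1:ℝ)} := measure_union_le _ _
      _ = ENNReal.ofReal c := by simp [Real.volume_Icc, Real.volume_singleton]
  · have hsub : Set.Ioo (0:ℝ) c ⊆ Φinv ⁻¹' Set.Iic y ∩ Set.Icc 0 1 := by
      rintro p ⟨h0, hpc⟩
      have hp1 : p < 1 := lt_of_lt_of_le hpc hc1
      refine ⟨?_, le_of_lt h0, le_of_lt hp1⟩
      by_contra hcon
      simp only [Set.mem_preimage, Set.mem_Iic] at hcon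
      push_neg at hcon
      have hle : cdf G y ≤ cdf G (Φinv p) := monotone_cdf G (le_of_lt hcon)
      rw [hΦinv p ⟨h0, hp1⟩] at hle
      exact absurd hle (not_le.mpr hpc)
    calc ENNReal.ofReal c = volume (Set.Ioo (0:ℝ) c) := by simp [Real.volume_Ioo]
      _ ≤ _ := measure_mono hsub
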